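/- Let g be a positive definite symmetric n×n real matrix and b a skew-symmetric n×n real matrix. Then det(g + b) ≥ det(g) > 0; in particular g + b is invertible and the Born–Infeld volume det(g+b)/det(g)^{1/2} is positive. -/

import Mathlib

open Matrix

lemma det_one_add_psd {n : ℕ} {Q : Matrix (Fin n) (Fin n) ℝ} (hQ : Q.PosSemidef) :
    1 ≤ (1 + Q).det := by
  have hB : (1 + Q).IsHermitian := isHermitian_one.add hQ.1
  rw [hB.det_eq_prod_eigenvalues]
  have key : ∀ i, (1 : ℝ) ≤ hB.eigenvalues i := by
    intro i
    set v : Fin n → ℝ := ⇑(hB.eigenvectorBasis i) with hv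
    have hv0 : v ≠ 0 := by
      have := hB.eigenvectorBasis.orthonormal.ne_zero i
      intro h
      apply this
      ext j
      exact congrFun h j
    have hmv : (1 + Q) *ᵥ v = hB.eigenvalues i • v := hB.mulVec_eigenvectorBasis i
    have hQv : Q *ᵥ v = (hB.eigenvalues i - 1) • v := by
      have h1 : v + Q *ᵥ v = hB.eigenvalues i • v := by
        rw [← hmv, add_mulVec, one_mulVec]
      rw [sub_smul, one_smul, ← h1]
      abel
    have h2 := hQ.dotProduct_mulVec_nonneg v
    rw [star_trivial, hQv, dotProduct_smul, smul_eq_mul] at h2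
    have hvv : 0 < v ⬝ᵥ v := by
      have := dotProduct_star_self_pos_iff (R := ℝ) (v := v) |>.mpr hv0
      simpa using this
    nlinarith
  calc (1 : ℝ) = ∏ i : Fin n, 1 := by simp
  _ ≤ ∏ i, (hB.eigenvalues i : ℝ) := Finset.prod_le_prod (by simp) (fun i _ => by simpa using key i)

open scoped MatrixOrder in
lemma det_le_det_add_psd {n : ℕ} {g P : Matrix (Fin n) (Fin n) ℝ} (hg : g.PosDef)
    (hP : P.PosSemidef) : g.det ≤ (g + P).det := by
  classical
  set S := CFC.sqrt g with hS
  have hSherm : S.IsHermitian := (CFC.sqrt_nonneg g).posSemidef.1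
  have hSS : S * S = g := CFC.sqrt_mul_sqrt_self g hg.posSemidef.nonneg
  have hdetg : 0 < g.det := hg.det_pos
  have hdetS : S.det ≠ 0 := by
    intro h
    rw [← hSS, det_mul, h, mul_zero] at hdetg
    exact lt_irrefl _ hdetg
  have hSinv : S * S⁻¹ = 1 := mul_nonsing_inv S (Ne.isUnit hdetS)
  have hSinv' : S⁻¹ * S = 1 := nonsing_inv_mul S (Ne.isUnit hdetS)
  have hQ : (S⁻¹ * P * S⁻¹).PosSemidef := by
    have := hP.conjTranspose_mul_mul_same S⁻¹
    rwa [hSherm.inv.eq] at this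
  have hid : g + P = S * (1 + S⁻¹ * P * S⁻¹) * S := by
    rw [mul_add, mul_one, add_mul, hSS]
    congr 1
    calc P = (S * S⁻¹) * P * (S⁻¹ * S) := by rw [hSinv, hSinv', Matrix.one_mul, Matrix.mul_one]
    _ = S * (S⁻¹ * P * S⁻¹) * S := by simp only [Matrix.mul_assoc]
  rw [hid, det_mul, det_mul]
  have h1 := det_one_add_psd hQ
  have hSsq : S.det * S.det = g.det := by rw [← det_mul, hSS]
  calc g.det = S.det * 1 * S.det := by rw [mul_one, hSsq]
  _ ≤ S.det * (1 + S⁻¹ * P * S⁻¹).det * S.det := by nlinarith [sq_nonneg S.det, mul_self_nonneg S.det]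
  _ = _ := rfl

theorem bornInfeld_volume_pos (n : ℕ) (g b : Matrix (Fin n) (Fin n) ℝ)
    (hg : g.PosDef) (hbskew : bᵀ = -b) :
    g.det ≤ (g + b).det ∧ 0 < g.det ∧ IsUnit (g + b).det ∧
      0 < (g + b).det / Real.sqrt g.det := by
  classical
  have hdetg : 0 < g.det := hg.det_pos
  have hgT : gᵀ = g := hg.1
  -- skew quadratic form vanishes
  have hskew0 : ∀ v : Fin n → ℝ, v ⬝ᵥ b *ᵥ v = 0 := by
    intro v
    have h1 : v ⬝ᵥ b *ᵥ v = -(v ⬝ᵥ b *ᵥ v) := by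
      conv_lhs => rw [dotProduct_mulVec, ← mulVec_transpose, hbskew, neg_mulVec,
        neg_dotProduct, dotProduct_comm]
    linarith
  -- det (g + t • b) ≠ 0 for every t
  have hne : ∀ t : ℝ, (g + t • b).det ≠ 0 := by
    intro t h0
    obtain ⟨v, hv, hmv⟩ := (exists_mulVec_eq_zero_iff).mpr h0
    have hpos := hg.dotProduct_mulVec_pos hv
    rw [star_trivial] at hpos
    have : v ⬝ᵥ (g + t • b) *ᵥ v = 0 := by rw [hmv, dotProduct_zero]
    rw [add_mulVec, dotProduct_add, smul_mulVec, dotProduct_smul, smul_eq_mul,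
      hskew0 v, mul_zero, add_zero] at this
    linarith
  -- positivity of det (g + b) via IVT
  have hcont : Continuous fun t : ℝ => (g + t • b).det := by
    apply Continuous.matrix_det
    exact continuous_const.add (continuous_id.smul continuous_const)
  have hpos : 0 < (g + b).det := by
    rcases lt_trichotomy ((g + b).det) 0 with h | h | h
    · exfalso
      have hf0 : (g + (0 : ℝ) • b).det = g.det := by rw [zero_smul, add_zero]
      have hmem : (0 : ℝ) ∈ Set.Icc ((g + (1:ℝ) • b).det) ((g + (0:ℝ) • b).det) := by
        constructor
        · rw [one_smul]; exact h.le
        · rw [hf0]; exact hdetg.le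
      obtain ⟨t, ht, hft⟩ := intermediate_value_Icc' (by norm_num : (0:ℝ) ≤ 1)
        (hcont.continuousOn) hmem
      exact hne t hft
    · exfalso; apply hne 1; rw [one_smul]; exact h
    · exact h
  -- the key identity
  have hunit : IsUnit g.det := hdetg.ne'.isUnit
  have hgi : g * g⁻¹ = 1 := mul_nonsing_inv g hunit
  have hig : g⁻¹ * g = 1 := nonsing_inv_mul g hunit
  have hP : (bᵀ * g⁻¹ * b).PosSemidef := hg.inv.posSemidef.conjTranspose_mul_mul_same b
  have hid : (g + b) * g⁻¹ * (g - b) = g + bᵀ * g⁻¹ * b := by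
    have hb' : bᵀ * g⁻¹ * b = -(b * g⁻¹ * b) := by rw [hbskew]; simp [Matrix.neg_mul]
    have hbg : b * g⁻¹ * g = b := by rw [Matrix.mul_assoc, hig, Matrix.mul_one]
    rw [add_mul, hgi, add_mul, one_mul, mul_sub, hbg, hb']
    abel
  have hdT : (g - b).det = (g + b).det := by
    rw [← det_transpose (g + b), transpose_add, hgT, hbskew, ← sub_eq_add_neg]
  have hdinv : g⁻¹.det = g.det⁻¹ := by
    rw [det_nonsing_inv, Ring.inverse_eq_inv']
  have h2 := congrArg Matrix.det hid
  rw [det_mul, det_mul, hdT, hdinv] at h2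
  have h3 := det_le_det_add_psd hg hP
  set a := (g + b).det with ha
  set d := g.det with hd
  set c := (g + bᵀ * g⁻¹ * b).det with hc
  have hd0 : d ≠ 0 := hdetg.ne'
  have hkey : a * a = c * d := by field_simp at h2; linarith
  have hge : d ≤ a := by nlinarith
  exact ⟨hge, hdetg, hpos.ne'.isUnit, div_pos hpos (Real.sqrt_pos.mpr hdetg)⟩
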